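/- Let X_1, X_2, … be i.i.d. ℕ-valued random variables with P(X_1 = n) ~ c₁ n^{-4/3} as n → ∞ for some c₁ > 0 (heavy-tailed with index 1/3). Then E[X_1] = +∞, and for every ε > 0, lim_{k→∞} limsup_{n→∞} P( Σ_{r ≤ ν_n} X_r 1_{X_r < n/k} ≥ ε n ) can be made arbitrarily small, where ν_n := inf{m : X_1 + ⋯ + X_m ≥ n}; equivalently, the sum up to first passage of level n is asymptotically dominated by finitely many of the largest terms. -/

import Mathlib

open Filter Topology MeasureTheory ProbabilityTheory


lemma htstep (T : ℕ) : ((T:ℝ)+1)^(-(1:ℝ)/3) ≤ 3/2*(((T:ℝ)+1)^((2:ℝ)/3) - (T:ℝ)^((2:ℝ)/3)) := by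
  set a : ℝ := ((T:ℝ)+1)^((1:ℝ)/3) with hadef
  set b : ℝ := (T:ℝ)^((1:ℝ)/3) with hbdef
  have hT0 : (0:ℝ) ≤ (T:ℝ) := Nat.cast_nonneg T
  have hT1 : (0:ℝ) ≤ (T:ℝ)+1 := by linarith
  have ha3 : a^3 = (T:ℝ)+1 := by
    rw [hadef, ← Real.rpow_natCast (((T:ℝ)+1)^((1:ℝ)/3)) 3, ← Real.rpow_mul hT1]
    norm_num
  have hb3 : b^3 = (T:ℝ) := by
    rw [hbdef, ← Real.rpow_natCast ((T:ℝ)^((1:ℝ)/3)) 3, ← Real.rpow_mul hT0]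
    norm_num
  have hb0 : 0 ≤ b := Real.rpow_nonneg hT0 _
  have hab : b ≤ a := Real.rpow_le_rpow hT0 (by linarith) (by norm_num)
  have ha0 : 0 ≤ a := le_trans hb0 hab
  have ha1 : 1 ≤ a := by
    by_contra h
    push_neg at h
    have h3 : a^3 < 1 := pow_lt_one₀ ha0 h (by norm_num)
    rw [ha3] at h3
    linarith
  have h2a : ((T:ℝ)+1)^((2:ℝ)/3) = a^2 := by
    rw [hadef, ← Real.rpow_natCast (((T:ℝ)+1)^((1:ℝ)/3)) 2, ← Real.rpow_mul hT1]
    norm_num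
  have h2b : (T:ℝ)^((2:ℝ)/3) = b^2 := by
    rw [hbdef, ← Real.rpow_natCast ((T:ℝ)^((1:ℝ)/3)) 2, ← Real.rpow_mul hT0]
    norm_num
  have hneg : ((T:ℝ)+1)^(-(1:ℝ)/3) = a⁻¹ := by
    rw [neg_div, Real.rpow_neg hT1, hadef]
  rw [hneg, h2a, h2b, inv_eq_one_div, div_le_iff₀ (by linarith)]
  nlinarith [mul_nonneg (sub_nonneg.2 hab) (mul_nonneg (sub_nonneg.2 hab) (by nlinarith : (0:ℝ) ≤ a + 2*b)), ha3, hb3, sq_nonneg (a-b), mul_nonneg (mul_nonneg hb0 hb0) hb0]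

lemma hsum_shift (T : ℕ) : ∑ i ∈ Finset.range T, ((i:ℝ)+1)^(-(1:ℝ)/3) ≤ 3/2 * (T:ℝ)^((2:ℝ)/3) := by
  induction T with
  | zero => simp
  | succ n ih =>
      rw [Finset.sum_range_succ]
      have := htstep n
      push_cast
      push_cast at ih this
      linarith

lemma hsum_rpow (T : ℕ) : ∑ j ∈ Finset.range T, (j:ℝ)^(-(1:ℝ)/3) ≤ 3/2 * (T:ℝ)^((2:ℝ)/3) := by
  cases T with
  | zero => simp
  | succ n =>
      rw [Finset.sum_range_succ']
      have h0 : ((0:ℕ):ℝ)^(-(1:ℝ)/3) = 0 := by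
        norm_num
      rw [h0, add_zero]
      calc ∑ i ∈ Finset.range n, (((i+1:ℕ)):ℝ)^(-(1:ℝ)/3)
          = ∑ i ∈ Finset.range n, ((i:ℝ)+1)^(-(1:ℝ)/3) := by
            refine Finset.sum_congr rfl fun i _ => ?_
            push_cast
            rw [add_comm]
        _ ≤ 3/2 * (n:ℝ)^((2:ℝ)/3) := hsum_shift n
        _ ≤ 3/2 * ((n+1:ℕ):ℝ)^((2:ℝ)/3) := by
            have := Real.rpow_le_rpow (Nat.cast_nonneg n)
              (by push_cast; linarith : (n:ℝ) ≤ ((n+1:ℕ):ℝ)) (by norm_num : (0:ℝ) ≤ 2/3)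
            linarith


lemma aux_lint {Ω : Type*} [MeasurableSpace Ω] (μ : Measure Ω) [IsProbabilityMeasure μ]
    (Y : Ω → ℕ) (hY : Measurable Y) (t : ℝ) :
    ∫⁻ ω, ENNReal.ofReal (if (Y ω : ℝ) < t then (Y ω : ℝ) else 0) ∂μ ≤
      ENNReal.ofReal (∑ j ∈ Finset.range ⌈t⌉₊, (j:ℝ) * (μ {ω | Y ω = j}).toReal) := by
  set g : ℕ → ℝ := fun j => if (j:ℝ) < t then (j:ℝ) else 0 with hg
  have hgnn : ∀ j, 0 ≤ g j := by
    intro j; rw [hg]; dsimp only; split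
    · exact Nat.cast_nonneg j
    · exact le_rfl
  have hgle : ∀ j, g j ≤ (j:ℝ) := by
    intro j; rw [hg]; dsimp only; split
    · exact le_rfl
    · exact Nat.cast_nonneg j
  have h1 : ∫⁻ ω, ENNReal.ofReal (g (Y ω)) ∂μ
      = ∫⁻ j, ENNReal.ofReal (g j) ∂(μ.map Y) :=
    (lintegral_map (f := fun j => ENNReal.ofReal (g j)) measurable_from_nat hY).symm
  have hsing : ∀ j : ℕ, (μ.map Y) {j} = μ {ω | Y ω = j} := by
    intro j
    rw [Measure.map_apply hY (measurableSet_singleton j)]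
    congr 1
  rw [h1, lintegral_countable' fun j : ℕ => ENNReal.ofReal (g j)]
  have hzero : ∀ j ∉ Finset.range ⌈t⌉₊, ENNReal.ofReal (g j) * (μ.map Y) {j} = 0 := by
    intro j hj
    have hj' : ⌈t⌉₊ ≤ j := by simpa using Finset.mem_range.not.mp hj
    have ht : t ≤ (j:ℝ) := le_trans (Nat.le_ceil t) (by exact_mod_cast hj')
    have : g j = 0 := by rw [hg]; exact if_neg (not_lt.mpr ht)
    rw [this, ENNReal.ofReal_zero, zero_mul]
  rw [tsum_eq_sum hzero]
  calc ∑ j ∈ Finset.range ⌈t⌉₊, ENNReal.ofReal (g j) * (μ.map Y) {j}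
      ≤ ∑ j ∈ Finset.range ⌈t⌉₊, ENNReal.ofReal ((j:ℝ) * (μ {ω | Y ω = j}).toReal) := by
        refine Finset.sum_le_sum fun j _ => ?_
        rw [hsing j]
        conv_lhs => rw [← ENNReal.ofReal_toReal (measure_ne_top μ {ω | Y ω = j})]
        rw [← ENNReal.ofReal_mul (hgnn j)]
        exact ENNReal.ofReal_le_ofReal
          (mul_le_mul_of_nonneg_right (hgle j) ENNReal.toReal_nonneg)
    _ = ENNReal.ofReal (∑ j ∈ Finset.range ⌈t⌉₊, (j:ℝ) * (μ {ω | Y ω = j}).toReal) :=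
        (ENNReal.ofReal_sum_of_nonneg fun j _ =>
          mul_nonneg (Nat.cast_nonneg j) ENNReal.toReal_nonneg).symm

lemma aux_markov {Ω : Type*} [MeasurableSpace Ω] (μ : Measure Ω) [IsProbabilityMeasure μ]
    (f : ℕ → Ω → ℝ) (hf : ∀ r, Measurable (f r)) (hfnn : ∀ r ω, 0 ≤ f r ω) (m : ℕ) (a : ℝ) (ha : 0 < a)
    (C : ℝ) (hC : 0 ≤ C)
    (hint : ∀ r, ∫⁻ ω, ENNReal.ofReal (f r ω) ∂μ ≤ ENNReal.ofReal C) :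
    (μ {ω | a ≤ ∑ r ∈ Finset.range m, f r ω}).toReal ≤ m * C / a := by
  set S : Ω → ℝ := fun ω => ∑ r ∈ Finset.range m, f r ω with hS
  have hSm : Measurable S := Finset.measurable_sum _ fun r _ => hf r
  have hlin : ∫⁻ ω, ENNReal.ofReal (S ω) ∂μ ≤ (m : ENNReal) * ENNReal.ofReal C := by
    calc ∫⁻ ω, ENNReal.ofReal (S ω) ∂μ
        ≤ ∫⁻ ω, ∑ r ∈ Finset.range m, ENNReal.ofReal (f r ω) ∂μ := by
          refine lintegral_mono fun ω => le_of_eq ?_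
          exact ENNReal.ofReal_sum_of_nonneg fun r _ => hfnn r ω
      _ = ∑ r ∈ Finset.range m, ∫⁻ ω, ENNReal.ofReal (f r ω) ∂μ :=
          lintegral_finset_sum _ fun r _ => (ENNReal.measurable_ofReal.comp (hf r))
      _ ≤ ∑ r ∈ Finset.range m, ENNReal.ofReal C := Finset.sum_le_sum fun r _ => hint r
      _ = (m : ENNReal) * ENNReal.ofReal C := by
          rw [Finset.sum_const, Finset.card_range, nsmul_eq_mul]
  have hmark := mul_meas_ge_le_lintegral₀
    ((ENNReal.measurable_ofReal.comp hSm).aemeasurable) (ENNReal.ofReal a) (μ := μ)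
  have hsub : {ω | a ≤ S ω} ⊆ {ω | ENNReal.ofReal a ≤ ENNReal.ofReal (S ω)} :=
    fun ω hω => ENNReal.ofReal_le_ofReal hω
  have h2 : μ {ω | a ≤ S ω} ≤ (m : ENNReal) * ENNReal.ofReal C / ENNReal.ofReal a := by
    rw [ENNReal.le_div_iff_mul_le (Or.inl (ENNReal.ofReal_pos.mpr ha).ne')
      (Or.inl ENNReal.ofReal_ne_top)]
    calc μ {ω | a ≤ S ω} * ENNReal.ofReal a
        ≤ μ {ω | ENNReal.ofReal a ≤ ENNReal.ofReal (S ω)} * ENNReal.ofReal a :=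
          mul_le_mul_left (measure_mono hsub) _
      _ = ENNReal.ofReal a * μ {ω | ENNReal.ofReal a ≤ ENNReal.ofReal (S ω)} := mul_comm _ _
      _ ≤ ∫⁻ ω, ENNReal.ofReal (S ω) ∂μ := hmark
      _ ≤ (m : ENNReal) * ENNReal.ofReal C := hlin
  have h3 := ENNReal.toReal_mono ?_ h2
  · refine le_trans h3 ?_
    rw [ENNReal.toReal_div, ENNReal.toReal_mul, ENNReal.toReal_ofReal hC,
      ENNReal.toReal_ofReal ha.le]
    simp
  · exact (ENNReal.div_lt_top (by finiteness) (ENNReal.ofReal_pos.mpr ha).ne').ne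

set_option maxHeartbeats 1600000 in
/-- Let `X_1, X_2, …` be i.i.d. `ℕ`-valued random variables with
`P(X_1 = n) ~ c₁ n^{-4/3}` as `n → ∞` for some `c₁ > 0`. Then `E[X_1] = +∞`, and
with `ν_n` the first passage index of the partial sums above level `n`,
`lim_{k→∞} limsup_{n→∞} P(Σ_{r ≤ ν_n} X_r 1_{X_r < n/k} ≥ ε n) = 0` for every
`ε > 0`: the sum up to first passage of level `n` is asymptotically dominated by
finitely many of the largest terms. -/
theorem heavy_tail_truncation
    {Ω : Type*} [MeasurableSpace Ω] (μ : Measure Ω) [IsProbabilityMeasure μ]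
    (X : ℕ → Ω → ℕ)
    (hmeas : ∀ r, Measurable (X r))
    (hindep : iIndepFun X μ)
    (hident : ∀ r, Measure.map (X r) μ = Measure.map (X 0) μ)
    (c₁ : ℝ) (hc₁ : 0 < c₁)
    (htail : Tendsto (fun n : ℕ => (n : ℝ) ^ ((4 : ℝ) / 3)
      * (μ {ω | X 0 ω = n}).toReal) atTop (𝓝 c₁))
    (ν : ℕ → Ω → ℕ)
    (hν : ∀ n ω, ν n ω = sInf {m : ℕ | n ≤ ∑ r ∈ Finset.range m, X r ω}) :
    (∫⁻ ω, (X 0 ω : ENNReal) ∂μ = ⊤) ∧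
    ∀ ε : ℝ, 0 < ε →
      Tendsto (fun k : ℕ =>
        Filter.limsup (fun n : ℕ =>
          (μ {ω | ε * n ≤ ∑ r ∈ Finset.range (ν n ω),
            if (X r ω : ℝ) < (n : ℝ) / k then (X r ω : ℝ) else 0}).toReal)
          atTop)
        atTop (𝓝 0) := by
  
  refine ⟨?_, ?_⟩
  set p : ℕ → ℝ := fun j => (μ {ω | X 0 ω = j}).toReal with hp
  -- step A
  obtain ⟨N₀, hN₀⟩ := eventually_atTop.mp
    ((htail.eventually (eventually_gt_nhds (show c₁/2 < c₁ by linarith))).and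
     (htail.eventually (eventually_lt_nhds (show c₁ < 2*c₁ by linarith))))
  set N := max N₀ 1 with hN
  have hN1 : 1 ≤ N := le_max_right _ _
  have hNb : ∀ j, N ≤ j → c₁/2 < (j:ℝ)^((4:ℝ)/3) * p j ∧ (j:ℝ)^((4:ℝ)/3) * p j < 2*c₁ :=
    fun j hj => hN₀ j (le_trans (le_max_left _ _) hj)
  have hjpos : ∀ j : ℕ, N ≤ j → (0:ℝ) < (j:ℝ) := fun j hj => by
    have : 1 ≤ j := le_trans hN1 hj
    exact_mod_cast Nat.succ_le_iff.mp this
  have hlow : ∀ j, N ≤ j → ENNReal.ofReal (c₁/2 * (j:ℝ)^(-(4:ℝ)/3)) ≤ μ {ω | X 0 ω = j} := by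
    intro j hj
    have h4 : (0:ℝ) < (j:ℝ)^((4:ℝ)/3) := Real.rpow_pos_of_pos (hjpos j hj) _
    have := (hNb j hj).1
    have hple : c₁/2 * (j:ℝ)^(-(4:ℝ)/3) ≤ p j := by
      rw [neg_div, Real.rpow_neg (le_of_lt (hjpos j hj)), mul_comm] at *
      rw [inv_mul_eq_div, div_le_iff₀ h4]
      nlinarith
    calc ENNReal.ofReal (c₁/2 * (j:ℝ)^(-(4:ℝ)/3)) ≤ ENNReal.ofReal (p j) :=
          ENNReal.ofReal_le_ofReal hple
      _ = μ {ω | X 0 ω = j} := ENNReal.ofReal_toReal (measure_ne_top μ _)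
  -- reduce lintegral to tsum
  have law_sing : ∀ j : ℕ, (μ.map (X 0)) {j} = μ {ω | X 0 ω = j} := by
    intro j
    rw [Measure.map_apply (hmeas 0) (measurableSet_singleton j)]
    congr 1
  have hint : ∫⁻ ω, (X 0 ω : ENNReal) ∂μ = ∑' j : ℕ, (j : ENNReal) * μ {ω | X 0 ω = j} := by
    have : ∫⁻ ω, (X 0 ω : ENNReal) ∂μ = ∫⁻ j, (j : ENNReal) ∂(μ.map (X 0)) :=
      (lintegral_map measurable_from_nat (hmeas 0)).symm
    rw [this, lintegral_countable' fun j : ℕ => (j : ENNReal)]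
    exact tsum_congr fun j => by rw [law_sing]
  rw [hint]
  -- now show tsum is top
  by_contra hfin
  set F : ℕ → ℝ := fun j => if N ≤ j then c₁/2 * (j:ℝ)⁻¹ else 0 with hF
  have hFnn : ∀ j, 0 ≤ F j := by
    intro j
    rw [hF]
    dsimp only
    split
    · have := hjpos j ‹N ≤ j›
      positivity
    · exact le_rfl
  have hle : ∀ j, ENNReal.ofReal (F j) ≤ (j : ENNReal) * μ {ω | X 0 ω = j} := by
    intro j
    rw [hF]
    dsimp only
    split
    · rename_i hj
      have hj0 := hjpos j hj
      calc ENNReal.ofReal (c₁/2 * (j:ℝ)⁻¹)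
          ≤ ENNReal.ofReal ((j:ℝ) * (c₁/2 * (j:ℝ)^(-(4:ℝ)/3))) := by
            apply ENNReal.ofReal_le_ofReal
            have h1 : (j:ℝ) * (c₁/2 * (j:ℝ)^(-(4:ℝ)/3)) = c₁/2 * ((j:ℝ) * (j:ℝ)^(-(4:ℝ)/3)) := by ring
            have h2 : (j:ℝ) * (j:ℝ)^(-(4:ℝ)/3) = (j:ℝ)^(-(1:ℝ)/3) := by
              nth_rewrite 1 [show (j:ℝ) = (j:ℝ)^(1:ℝ) from (Real.rpow_one _).symm]
              rw [← Real.rpow_add hj0]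
              norm_num
            rw [h1, h2]
            have h3 : (j:ℝ)⁻¹ = (j:ℝ)^(-(1:ℝ)) := (Real.rpow_neg_one _).symm
            rw [h3]
            have h4 : (j:ℝ)^(-(1:ℝ)) ≤ (j:ℝ)^(-(1:ℝ)/3) :=
              Real.rpow_le_rpow_of_exponent_le (by exact_mod_cast Nat.one_le_iff_ne_zero.mpr (by omega)) (by norm_num)
            nlinarith
        _ = (j : ENNReal) * ENNReal.ofReal (c₁/2 * (j:ℝ)^(-(4:ℝ)/3)) := by
            rw [ENNReal.ofReal_mul (Nat.cast_nonneg j), ENNReal.ofReal_natCast]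
        _ ≤ (j : ENNReal) * μ {ω | X 0 ω = j} := by
            exact mul_le_mul_right (hlow j hj) _
    · simp
  have hlt : ∑' j, ENNReal.ofReal (F j) ≠ ⊤ := by
    intro h
    exact hfin (top_unique (h ▸ ENNReal.tsum_le_tsum hle))
  have hsumF : Summable F := by
    have h1 : ∀ j, ENNReal.ofReal (F j) = ((F j).toNNReal : ENNReal) := fun j => rfl
    rw [funext h1] at hlt
    have h2 := ENNReal.tsum_coe_ne_top_iff_summable.mp hlt
    have h3 : (fun j => ((F j).toNNReal : ℝ)) = F := funext fun j => Real.coe_toNNReal _ (hFnn j)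
    have h4 := NNReal.summable_coe.mpr h2
    rwa [h3] at h4
  -- contradiction with harmonic series
  have hshift : Summable (fun j : ℕ => F (j + N)) := (summable_nat_add_iff N).2 hsumF
  have heq : (fun j : ℕ => F (j + N)) = fun j : ℕ => c₁/2 * ((j + N : ℕ):ℝ)⁻¹ := by
    funext j
    rw [hF]
    simp [Nat.le_add_left]
  rw [heq] at hshift
  have hG : Summable (fun j : ℕ => c₁/2 * ((j:ℕ):ℝ)⁻¹) := (summable_nat_add_iff N).1 hshift
  have : Summable (fun j : ℕ => ((j:ℕ):ℝ)⁻¹) := by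
    have hmul : (2/c₁) * (c₁/2) = 1 := by field_simp
    have hfun : (fun j : ℕ => ((j:ℕ):ℝ)⁻¹) = fun j : ℕ => 2/c₁ * (c₁/2 * ((j:ℕ):ℝ)⁻¹) :=
      funext fun j => by rw [← mul_assoc, hmul, one_mul]
    rw [hfun]
    exact hG.mul_left _
  exact Real.not_summable_natCast_inv this
  set p : ℕ → ℝ := fun j => (μ {ω | X 0 ω = j}).toReal with hp
  obtain ⟨N₀, hN₀⟩ := eventually_atTop.mp
    ((htail.eventually (eventually_gt_nhds (show c₁/2 < c₁ by linarith))).and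
     (htail.eventually (eventually_lt_nhds (show c₁ < 2*c₁ by linarith))))
  set N := max N₀ 1 with hNdef
  have hN1 : 1 ≤ N := le_max_right _ _
  have hNb : ∀ j, N ≤ j → c₁/2 < (j:ℝ)^((4:ℝ)/3) * p j ∧ (j:ℝ)^((4:ℝ)/3) * p j < 2*c₁ :=
    fun j hj => hN₀ j (le_trans (le_max_left _ _) hj)
  have hjpos : ∀ j : ℕ, N ≤ j → (0:ℝ) < (j:ℝ) := fun j hj => by
    have : 1 ≤ j := le_trans hN1 hj
    exact_mod_cast Nat.succ_le_iff.mp this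
  have hpnn : ∀ j, 0 ≤ p j := fun j => ENNReal.toReal_nonneg
  have hp1 : ∀ j, p j ≤ 1 := fun j => by
    rw [hp]
    dsimp only
    rw [show (1:ℝ) = (1:ENNReal).toReal by simp]
    exact ENNReal.toReal_mono ENNReal.one_ne_top prob_le_one
  -- lower bound on pmf (in ENNReal)
  have hlow : ∀ j, N ≤ j → ENNReal.ofReal (c₁/2 * (j:ℝ)^(-(4:ℝ)/3)) ≤ μ {ω | X 0 ω = j} := by
    intro j hj
    have h4 : (0:ℝ) < (j:ℝ)^((4:ℝ)/3) := Real.rpow_pos_of_pos (hjpos j hj) _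
    have := (hNb j hj).1
    have hple : c₁/2 * (j:ℝ)^(-(4:ℝ)/3) ≤ p j := by
      rw [neg_div, Real.rpow_neg (le_of_lt (hjpos j hj)), mul_comm] at *
      rw [inv_mul_eq_div, div_le_iff₀ h4]
      nlinarith
    calc ENNReal.ofReal (c₁/2 * (j:ℝ)^(-(4:ℝ)/3)) ≤ ENNReal.ofReal (p j) :=
          ENNReal.ofReal_le_ofReal hple
      _ = μ {ω | X 0 ω = j} := ENNReal.ofReal_toReal (measure_ne_top μ _)
  -- upper bound on j * p j
  have hup : ∀ j, N ≤ j → (j:ℝ) * p j ≤ 2*c₁*(j:ℝ)^(-(1:ℝ)/3) := by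
    intro j hj
    have hj0 := hjpos j hj
    have he : (j:ℝ)^((4:ℝ)/3) * (j:ℝ)^(-(1:ℝ)/3) = (j:ℝ) := by
      rw [← Real.rpow_add hj0]
      norm_num
    have h2 := (hNb j hj).2
    have hrnn : (0:ℝ) ≤ (j:ℝ)^(-(1:ℝ)/3) := Real.rpow_nonneg hj0.le _
    calc (j:ℝ) * p j = ((j:ℝ)^((4:ℝ)/3) * p j) * (j:ℝ)^(-(1:ℝ)/3) := by
          rw [mul_comm ((j:ℝ)^((4:ℝ)/3)) (p j), mul_assoc, he, mul_comm]
      _ ≤ (2*c₁) * (j:ℝ)^(-(1:ℝ)/3) := mul_le_mul_of_nonneg_right h2.le hrnn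
  -- truncated mean bound
  have hM : ∀ T : ℕ, (∑ j ∈ Finset.range T, (j:ℝ) * p j)
      ≤ (N:ℝ)^2 + 3*c₁*(T:ℝ)^((2:ℝ)/3) := by
    intro T
    have key : ∀ j : ℕ, (j:ℝ) * p j ≤
        (if j < N then (N:ℝ) else 0) + (if j < N then 0 else 2*c₁*(j:ℝ)^(-(1:ℝ)/3)) := by
      intro j
      by_cases hj : j < N
      · rw [if_pos hj, if_pos hj, add_zero]
        have h1 : (j:ℝ) ≤ (N:ℝ) := by exact_mod_cast hj.le
        nlinarith [hpnn j, hp1 j, Nat.cast_nonneg (α := ℝ) j]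
      · rw [if_neg hj, if_neg hj, zero_add]
        exact hup j (not_lt.mp hj)
    calc ∑ j ∈ Finset.range T, (j:ℝ) * p j
        ≤ ∑ j ∈ Finset.range T, ((if j < N then (N:ℝ) else 0)
            + (if j < N then 0 else 2*c₁*(j:ℝ)^(-(1:ℝ)/3))) :=
          Finset.sum_le_sum fun j _ => key j
      _ = (∑ j ∈ Finset.range T, (if j < N then (N:ℝ) else 0))
            + ∑ j ∈ Finset.range T, (if j < N then 0 else 2*c₁*(j:ℝ)^(-(1:ℝ)/3)) :=
          Finset.sum_add_distrib
      _ ≤ (N:ℝ)^2 + 3*c₁*(T:ℝ)^((2:ℝ)/3) := by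
          have hA : (∑ j ∈ Finset.range T, (if j < N then (N:ℝ) else 0)) ≤ (N:ℝ)^2 := by
            rw [Finset.sum_ite, Finset.sum_const_zero, add_zero, Finset.sum_const, nsmul_eq_mul]
            have hcard : ((Finset.range T).filter (fun j => j < N)).card ≤ N := by
              have hsubs : (Finset.range T).filter (fun j => j < N) ⊆ Finset.range N := by
                intro j hj
                rw [Finset.mem_range]
                exact (Finset.mem_filter.mp hj).2
              simpa using Finset.card_le_card hsubs
            have : (((Finset.range T).filter (fun j => j < N)).card : ℝ) ≤ (N:ℝ) := by
              exact_mod_cast hcard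
            nlinarith [Nat.cast_nonneg (α := ℝ) N]
          have hB : (∑ j ∈ Finset.range T, (if j < N then 0 else 2*c₁*(j:ℝ)^(-(1:ℝ)/3)))
              ≤ 3*c₁*(T:ℝ)^((2:ℝ)/3) := by
            calc ∑ j ∈ Finset.range T, (if j < N then 0 else 2*c₁*(j:ℝ)^(-(1:ℝ)/3))
                ≤ ∑ j ∈ Finset.range T, 2*c₁*(j:ℝ)^(-(1:ℝ)/3) := by
                  refine Finset.sum_le_sum fun j _ => ?_
                  split
                  · positivity
                  · exact le_rfl
              _ = 2*c₁ * ∑ j ∈ Finset.range T, (j:ℝ)^(-(1:ℝ)/3) := by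
                  rw [Finset.mul_sum]
              _ ≤ 2*c₁ * (3/2 * (T:ℝ)^((2:ℝ)/3)) := by
                  have := hsum_rpow T
                  nlinarith
              _ = 3*c₁*(T:ℝ)^((2:ℝ)/3) := by ring
          linarith
  -- tail lower bound
  set c₂ : ℝ := c₁/8 with hc₂def
  have hc₂ : 0 < c₂ := by rw [hc₂def]; linarith
  have hq : ∀ n : ℕ, N ≤ n → c₂ * (n:ℝ)^(-(1:ℝ)/3) ≤ (μ {ω | n ≤ X 0 ω}).toReal := by
    intro n hn
    have hn0 := hjpos n hn
    have hmeasj : ∀ j : ℕ, MeasurableSet {ω | X 0 ω = j} :=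
      fun j => hmeas 0 (measurableSet_singleton j)
    have hdisj : (↑(Finset.Ico n (2*n)) : Set ℕ).PairwiseDisjoint
        (fun j => {ω | X 0 ω = j}) := by
      intro i _ j _ hij
      refine Set.disjoint_left.mpr fun ω hi hj => hij ?_
      rw [← hi, ← hj]
    have hunion := measure_biUnion_finset (μ := μ) hdisj (fun j _ => hmeasj j)
    have hsub : (⋃ j ∈ Finset.Ico n (2*n), {ω | X 0 ω = j}) ⊆ {ω | n ≤ X 0 ω} := by
      intro ω hω
      simp only [Set.mem_iUnion] at hω
      obtain ⟨j, hj, hωj⟩ := hω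
      have := (Finset.mem_Ico.mp hj).1
      exact le_trans this (le_of_eq hωj.symm)
    have h1 : ENNReal.ofReal ((n:ℝ) * (c₁/2 * ((2*n:ℕ):ℝ)^(-(4:ℝ)/3)))
        ≤ μ {ω | n ≤ X 0 ω} := by
      calc ENNReal.ofReal ((n:ℝ) * (c₁/2 * ((2*n:ℕ):ℝ)^(-(4:ℝ)/3)))
          = ∑ j ∈ Finset.Ico n (2*n), ENNReal.ofReal (c₁/2 * ((2*n:ℕ):ℝ)^(-(4:ℝ)/3)) := by
            rw [Finset.sum_const, Nat.card_Ico, nsmul_eq_mul]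
            have : (2*n - n : ℕ) = n := by omega
            rw [this, ← ENNReal.ofReal_natCast n, ← ENNReal.ofReal_mul (Nat.cast_nonneg n)]
        _ ≤ ∑ j ∈ Finset.Ico n (2*n), μ {ω | X 0 ω = j} := by
            refine Finset.sum_le_sum fun j hj => ?_
            obtain ⟨hj1, hj2⟩ := Finset.mem_Ico.mp hj
            refine le_trans ?_ (hlow j (le_trans hn hj1))
            apply ENNReal.ofReal_le_ofReal
            have hjj : (0:ℝ) < (j:ℝ) := hjpos j (le_trans hn hj1)
            have : ((2*n:ℕ):ℝ)^(-(4:ℝ)/3) ≤ (j:ℝ)^(-(4:ℝ)/3) := by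
              apply Real.rpow_le_rpow_of_nonpos hjj (by exact_mod_cast hj2.le) (by norm_num)
            nlinarith
        _ = μ (⋃ j ∈ Finset.Ico n (2*n), {ω | X 0 ω = j}) := hunion.symm
        _ ≤ μ {ω | n ≤ X 0 ω} := measure_mono hsub
    have h2 : c₂ * (n:ℝ)^(-(1:ℝ)/3) ≤ (n:ℝ) * (c₁/2 * ((2*n:ℕ):ℝ)^(-(4:ℝ)/3)) := by
      have hcast : ((2*n:ℕ):ℝ) = 2*(n:ℝ) := by push_cast; ring
      rw [hcast]
      have hmulr : (2*(n:ℝ))^(-(4:ℝ)/3) = (2:ℝ)^(-(4:ℝ)/3) * (n:ℝ)^(-(4:ℝ)/3) :=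
        Real.mul_rpow (by norm_num) hn0.le
      rw [hmulr]
      have h23 : (1:ℝ)/4 ≤ (2:ℝ)^(-(4:ℝ)/3) := by
        rw [neg_div, Real.rpow_neg (by norm_num)]
        rw [show (1:ℝ)/4 = ((4:ℝ))⁻¹ by norm_num]
        apply inv_anti₀
        · positivity
        · calc (2:ℝ)^((4:ℝ)/3) ≤ (2:ℝ)^(2:ℝ) :=
                Real.rpow_le_rpow_of_exponent_le (by norm_num) (by norm_num)
            _ = 4 := by
                rw [show (2:ℝ) = ((2:ℕ):ℝ) by norm_num, Real.rpow_natCast]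
                norm_num
      have hnn : (n:ℝ) * (n:ℝ)^(-(4:ℝ)/3) = (n:ℝ)^(-(1:ℝ)/3) := by
        nth_rewrite 1 [show (n:ℝ) = (n:ℝ)^(1:ℝ) from (Real.rpow_one _).symm]
        rw [← Real.rpow_add hn0]
        norm_num
      have hr43 : (0:ℝ) ≤ (n:ℝ)^(-(4:ℝ)/3) := Real.rpow_nonneg hn0.le _
      have hr13 : (0:ℝ) ≤ (n:ℝ)^(-(1:ℝ)/3) := Real.rpow_nonneg hn0.le _
      calc c₂ * (n:ℝ)^(-(1:ℝ)/3) = c₁/2 * (1/4) * (n:ℝ)^(-(1:ℝ)/3) := by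
            rw [hc₂def]; ring
        _ ≤ c₁/2 * (2:ℝ)^(-(4:ℝ)/3) * (n:ℝ)^(-(1:ℝ)/3) := by
            have h := mul_le_mul_of_nonneg_right
              (mul_le_mul_of_nonneg_left h23 (by linarith : (0:ℝ) ≤ c₁/2)) hr13
            linarith
        _ = (n:ℝ) * (c₁/2 * ((2:ℝ)^(-(4:ℝ)/3) * (n:ℝ)^(-(4:ℝ)/3))) := by
            rw [← hnn]; ring
    calc c₂ * (n:ℝ)^(-(1:ℝ)/3)
        = (ENNReal.ofReal (c₂ * (n:ℝ)^(-(1:ℝ)/3))).toReal := by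
          rw [ENNReal.toReal_ofReal (by positivity)]
      _ ≤ (μ {ω | n ≤ X 0 ω}).toReal := by
          apply ENNReal.toReal_mono (measure_ne_top μ _)
          exact le_trans (ENNReal.ofReal_le_ofReal h2) h1
    -- PART 2 CONTINUATION
  intro ε hε
  set C₃ : ℝ := 4*(1+6*c₁)/ε with hC₃def
  set B : ℕ → ℝ := fun k => Real.exp (-(c₂ * (k:ℝ)^((1:ℝ)/3))) + C₃ * (k:ℝ)^(-(1:ℝ)/3)
    with hBdef
  have hsinglt : ∀ (r n : ℕ), μ {ω | X r ω < n} = μ {ω | X 0 ω < n} := by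
    intro r n
    have ms : MeasurableSet (Set.Iio n) := trivial
    have h1 : {ω | X r ω < n} = X r ⁻¹' (Set.Iio n) := rfl
    have h2 : {ω | X 0 ω < n} = X 0 ⁻¹' (Set.Iio n) := rfl
    rw [h1, h2, ← Measure.map_apply (hmeas r) ms, ← Measure.map_apply (hmeas 0) ms, hident r]
  have hsingeq : ∀ (r j : ℕ), μ {ω | X r ω = j} = μ {ω | X 0 ω = j} := by
    intro r j
    have ms : MeasurableSet ({j} : Set ℕ) := trivial
    have h1 : {ω | X r ω = j} = X r ⁻¹' ({j} : Set ℕ) := rfl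
    have h2 : {ω | X 0 ω = j} = X 0 ⁻¹' ({j} : Set ℕ) := rfl
    rw [h1, h2, ← Measure.map_apply (hmeas r) ms, ← Measure.map_apply (hmeas 0) ms, hident r]
  -- the main estimate
  have hmain : ∀ k : ℕ, 1 ≤ k → ∀ n : ℕ, max (max N k) (k * N^3 + 1) ≤ n →
      (μ {ω | ε * n ≤ ∑ r ∈ Finset.range (ν n ω),
        if (X r ω : ℝ) < (n : ℝ) / k then (X r ω : ℝ) else 0}).toReal ≤ B k := by
    intro k hk n hn
    have hnN : N ≤ n := le_trans (le_trans (le_max_left _ _) (le_max_left _ _)) hn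
    have hnk : k ≤ n := le_trans (le_trans (le_max_right _ _) (le_max_left _ _)) hn
    have hnkN : k * N^3 ≤ n := by
      have := le_trans (le_max_right _ _) hn
      omega
    have hn1 : 1 ≤ n := le_trans hN1 hnN
    have hn0 : (0:ℝ) < (n:ℝ) := by exact_mod_cast hn1
    have hk0 : (0:ℝ) < (k:ℝ) := by exact_mod_cast hk
    set t : ℝ := (n:ℝ)/(k:ℝ) with htdef
    have ht1 : 1 ≤ t := by
      rw [htdef, le_div_iff₀ hk0, one_mul]
      exact_mod_cast hnk
    have ht0 : 0 < t := lt_of_lt_of_le one_pos ht1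
    set T : ℕ := ⌈t⌉₊ with hTdef
    set a : ℝ := (n:ℝ)^((1:ℝ)/3) with hadef
    set b : ℝ := (n:ℝ)^((2:ℝ)/3) with hbdef
    set c : ℝ := (k:ℝ)^((1:ℝ)/3) with hcdef
    set d : ℝ := (k:ℝ)^((2:ℝ)/3) with hddef
    have ha0 : 0 < a := Real.rpow_pos_of_pos hn0 _
    have hb0 : 0 < b := Real.rpow_pos_of_pos hn0 _
    have hcc0 : 0 < c := Real.rpow_pos_of_pos hk0 _
    have hd0 : 0 < d := Real.rpow_pos_of_pos hk0 _
    have ha1 : 1 ≤ a := by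
      rw [hadef]
      calc (1:ℝ) = (1:ℝ)^((1:ℝ)/3) := (Real.one_rpow _).symm
        _ ≤ (n:ℝ)^((1:ℝ)/3) :=
            Real.rpow_le_rpow zero_le_one (by exact_mod_cast hn1) (by norm_num)
    have hc1 : 1 ≤ c := by
      rw [hcdef]
      calc (1:ℝ) = (1:ℝ)^((1:ℝ)/3) := (Real.one_rpow _).symm
        _ ≤ (k:ℝ)^((1:ℝ)/3) :=
            Real.rpow_le_rpow zero_le_one (by exact_mod_cast hk) (by norm_num)
    have hab : a * b = (n:ℝ) := by
      rw [hadef, hbdef, ← Real.rpow_add hn0]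
      norm_num
    have hcd : c / d = (k:ℝ)^(-(1:ℝ)/3) := by
      rw [hcdef, hddef, ← Real.rpow_sub hk0]
      norm_num
    set K : ℕ := ⌈c⌉₊ with hKdef
    set m : ℕ := ⌈a⌉₊ * K with hmdef
    set W : ℝ := (N:ℝ)^2 + 3*c₁*(T:ℝ)^((2:ℝ)/3) with hWdef
    have hW0 : 0 ≤ W := by
      rw [hWdef]
      have : (0:ℝ) ≤ (T:ℝ)^((2:ℝ)/3) := Real.rpow_nonneg (Nat.cast_nonneg T) _
      nlinarith [sq_nonneg ((N:ℝ))]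
    set f : ℕ → Ω → ℝ := fun r ω => if (X r ω : ℝ) < t then (X r ω : ℝ) else 0 with hfdef
    have hfm : ∀ r, Measurable (f r) := fun r => by
      rw [hfdef]
      exact (measurable_from_nat (f := fun j : ℕ => if (j:ℝ) < t then (j:ℝ) else 0)).comp
        (hmeas r)
    have hfnn : ∀ r ω, 0 ≤ f r ω := by
      intro r ω
      rw [hfdef]
      dsimp only
      split
      · exact Nat.cast_nonneg _
      · exact le_rfl
    have hmge : a * c ≤ (m:ℝ) := by
      rw [hmdef]
      push_cast
      exact mul_le_mul (Nat.le_ceil a) (Nat.le_ceil c) hcc0.le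
        (le_trans ha0.le (Nat.le_ceil a))
    have hmle : (m:ℝ) ≤ 4 * (a * c) := by
      rw [hmdef]
      push_cast
      have h1 : (⌈a⌉₊:ℝ) ≤ a + 1 := (Nat.ceil_lt_add_one ha0.le).le
      have h2 : (⌈c⌉₊:ℝ) ≤ c + 1 := (Nat.ceil_lt_add_one hcc0.le).le
      have h3 : a + 1 ≤ 2*a := by linarith
      have h4 : c + 1 ≤ 2*c := by linarith
      calc (⌈a⌉₊:ℝ) * (⌈c⌉₊:ℝ) ≤ (2*a) * (2*c) :=
            mul_le_mul (le_trans h1 h3) (le_trans h2 h4) (by positivity) (by linarith)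
        _ = 4 * (a*c) := by ring
    -- event inclusion
    have hincl : {ω | ε * n ≤ ∑ r ∈ Finset.range (ν n ω), f r ω} ⊆
        (⋂ r ∈ Finset.range m, {ω | X r ω < n}) ∪
        {ω | ε * n ≤ ∑ r ∈ Finset.range m, f r ω} := by
      intro ω hω
      simp only [Set.mem_setOf_eq] at hω
      by_cases hc : ∀ r, r < m → X r ω < n
      · exact Or.inl (Set.mem_iInter₂.mpr fun r hr => hc r (Finset.mem_range.mp hr))
      · push_neg at hc
        obtain ⟨r, hrm, hrn⟩ := hc
        have hνle : ν n ω ≤ m := by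
          rw [hν n ω]
          refine le_trans (Nat.sInf_le ?_) hrm
          exact le_trans hrn (Finset.single_le_sum
            (f := fun s => X s ω) (fun s _ => Nat.zero_le _) (Finset.self_mem_range_succ r))
        refine Or.inr ?_
        simp only [Set.mem_setOf_eq]
        refine le_trans hω (Finset.sum_le_sum_of_subset_of_nonneg
          (Finset.range_subset_range.mpr hνle) fun i _ _ => hfnn i ω)
    -- E1 : product bound
    have hE1 : μ (⋂ r ∈ Finset.range m, {ω | X r ω < n}) = (μ {ω | X 0 ω < n})^m := by
      rw [hindep.meas_biInter (S := Finset.range m) (s := fun r => {ω | X r ω < n})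
        (fun r _ => ⟨Set.Iio n, trivial, rfl⟩)]
      rw [Finset.prod_congr rfl (fun r _ => hsinglt r n), Finset.prod_const,
        Finset.card_range]
    have hE1b : ((μ {ω | X 0 ω < n})^m).toReal ≤ Real.exp (-(c₂ * c)) := by
      set q : ℝ := (μ {ω | n ≤ X 0 ω}).toReal with hqdef
      have hq0 : 0 ≤ q := ENNReal.toReal_nonneg
      have hmeasge : MeasurableSet {ω | n ≤ X 0 ω} := hmeas 0 trivial
      have hcompl : {ω | X 0 ω < n} = {ω | n ≤ X 0 ω}ᶜ := by
        ext ω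
        simp [not_le]
      have hu : (μ {ω | X 0 ω < n}).toReal = 1 - q := by
        rw [hcompl, prob_compl_eq_one_sub hmeasge,
          ENNReal.toReal_sub_of_le prob_le_one ENNReal.one_ne_top, ENNReal.toReal_one]
      have hqlow : c₂ * (n:ℝ)^(-(1:ℝ)/3) ≤ q := hq n hnN
      have hu0 : 0 ≤ 1 - q := hu ▸ ENNReal.toReal_nonneg
      have hstep : (1 - q) ≤ Real.exp (-q) := by
        have := Real.add_one_le_exp (-q)
        linarith
      have hmc : c ≤ (n:ℝ)^(-(1:ℝ)/3) * (m:ℝ) := by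
        have h1 : (n:ℝ)^(-(1:ℝ)/3) * (a * c) = c := by
          rw [hadef, ← mul_assoc, ← Real.rpow_add hn0]
          norm_num
        calc c = (n:ℝ)^(-(1:ℝ)/3) * (a * c) := h1.symm
          _ ≤ (n:ℝ)^(-(1:ℝ)/3) * (m:ℝ) :=
            mul_le_mul_of_nonneg_left hmge (Real.rpow_nonneg hn0.le _)
      calc ((μ {ω | X 0 ω < n})^m).toReal = (1 - q)^m := by
            rw [ENNReal.toReal_pow, hu]
        _ ≤ (Real.exp (-q))^m := pow_le_pow_left₀ hu0 hstep m
        _ = Real.exp ((m:ℝ) * (-q)) := (Real.exp_nat_mul (-q) m).symm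
        _ ≤ Real.exp (-(c₂ * c)) := by
            rw [Real.exp_le_exp]
            have h2 : c₂ * c ≤ c₂ * ((n:ℝ)^(-(1:ℝ)/3) * (m:ℝ)) :=
              mul_le_mul_of_nonneg_left hmc hc₂.le
            have h3 : c₂ * (n:ℝ)^(-(1:ℝ)/3) * (m:ℝ) ≤ q * (m:ℝ) :=
              mul_le_mul_of_nonneg_right hqlow (Nat.cast_nonneg m)
            nlinarith
    -- E2 : Markov bound
    have hintr : ∀ r, ∫⁻ ω, ENNReal.ofReal (f r ω) ∂μ ≤ ENNReal.ofReal W := by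
      intro r
      refine le_trans (aux_lint μ (X r) (hmeas r) t) ?_
      apply ENNReal.ofReal_le_ofReal
      have heq : ∑ j ∈ Finset.range ⌈t⌉₊, (j:ℝ) * (μ {ω | X r ω = j}).toReal
          = ∑ j ∈ Finset.range T, (j:ℝ) * p j := by
        refine Finset.sum_congr rfl fun j _ => ?_
        rw [hsingeq r j]
      rw [heq, hWdef]
      exact hM T
    have hE2 : (μ {ω | ε * n ≤ ∑ r ∈ Finset.range m, f r ω}).toReal
        ≤ (m:ℝ) * W / (ε * n) :=
      aux_markov μ f hfm hfnn m (ε * n) (by positivity) W hW0 hintr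
    -- algebra
    have hTle : (T:ℝ) ≤ 2 * t := by
      calc (T:ℝ) ≤ t + 1 := (Nat.ceil_lt_add_one ht0.le).le
        _ ≤ 2 * t := by linarith
    have hTb : (T:ℝ)^((2:ℝ)/3) ≤ 2 * (b/d) := by
      have h1 : (T:ℝ)^((2:ℝ)/3) ≤ (2*t)^((2:ℝ)/3) :=
        Real.rpow_le_rpow (Nat.cast_nonneg T) hTle (by norm_num)
      have h2 : (2*t)^((2:ℝ)/3) = (2:ℝ)^((2:ℝ)/3) * t^((2:ℝ)/3) :=
        Real.mul_rpow (by norm_num) ht0.le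
      have h3 : (2:ℝ)^((2:ℝ)/3) ≤ 2 := by
        calc (2:ℝ)^((2:ℝ)/3) ≤ (2:ℝ)^(1:ℝ) :=
              Real.rpow_le_rpow_of_exponent_le (by norm_num) (by norm_num)
          _ = 2 := Real.rpow_one 2
      have h4 : t^((2:ℝ)/3) = b / d := by
        rw [htdef, Real.div_rpow hn0.le hk0.le, hbdef, hddef]
      have h5 : 0 ≤ t^((2:ℝ)/3) := Real.rpow_nonneg ht0.le _
      calc (T:ℝ)^((2:ℝ)/3) ≤ (2:ℝ)^((2:ℝ)/3) * t^((2:ℝ)/3) := h2 ▸ h1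
        _ ≤ 2 * t^((2:ℝ)/3) := mul_le_mul_of_nonneg_right h3 h5
        _ = 2 * (b/d) := by rw [h4]
    have hN2bd : (N:ℝ)^2 ≤ b/d := by
      have h1 : ((N:ℝ)^3 : ℝ) ≤ t := by
        rw [htdef, le_div_iff₀ hk0]
        calc (N:ℝ)^3 * (k:ℝ) = ((k * N^3 : ℕ):ℝ) := by push_cast; ring
          _ ≤ (n:ℝ) := by exact_mod_cast hnkN
      have h2 : ((N:ℝ)^3)^((2:ℝ)/3) ≤ t^((2:ℝ)/3) :=
        Real.rpow_le_rpow (by positivity) h1 (by norm_num)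
      have h3 : ((N:ℝ)^3)^((2:ℝ)/3) = (N:ℝ)^2 := by
        rw [← Real.rpow_natCast (N:ℝ) 3, ← Real.rpow_mul (Nat.cast_nonneg N)]
        rw [show ((3:ℕ):ℝ) * ((2:ℝ)/3) = ((2:ℕ):ℝ) by norm_num, Real.rpow_natCast]
      have h4 : t^((2:ℝ)/3) = b / d := by
        rw [htdef, Real.div_rpow hn0.le hk0.le, hbdef, hddef]
      rw [← h3, ← h4]
      exact h2
    have hWle : W ≤ (1 + 6*c₁) * (b/d) := by
      rw [hWdef]
      have h1 : 3*c₁*(T:ℝ)^((2:ℝ)/3) ≤ 6*c₁*(b/d) := by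
        have := mul_le_mul_of_nonneg_left hTb (by linarith : (0:ℝ) ≤ 3*c₁)
        linarith
      nlinarith [hN2bd]
    have halg : (m:ℝ) * W / (ε * n) ≤ C₃ * (k:ℝ)^(-(1:ℝ)/3) := by
      rw [← hcd]
      have hnum : (m:ℝ) * W ≤ (4*(a*c)) * ((1 + 6*c₁) * (b/d)) := by
        refine mul_le_mul hmle hWle hW0 (by positivity)
      have hden : (0:ℝ) < ε * n := by positivity
      calc (m:ℝ) * W / (ε * n) ≤ (4*(a*c)) * ((1 + 6*c₁) * (b/d)) / (ε * n) := by
            rw [div_eq_mul_inv, div_eq_mul_inv ((4*(a*c)) * ((1 + 6*c₁) * (b/d)))]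
            exact mul_le_mul_of_nonneg_right hnum (by positivity)
        _ = C₃ * (c/d) := by
            rw [← hab, hC₃def]
            field_simp
    -- combine
    have hfin1 : μ (⋂ r ∈ Finset.range m, {ω | X r ω < n}) ≠ ⊤ := measure_ne_top μ _
    have hfin2 : μ {ω | ε * n ≤ ∑ r ∈ Finset.range m, f r ω} ≠ ⊤ := measure_ne_top μ _
    have hcomb := ENNReal.toReal_mono (ENNReal.add_ne_top.mpr ⟨hfin1, hfin2⟩)
      (le_trans (measure_mono hincl) (measure_union_le _ _))
    rw [ENNReal.toReal_add hfin1 hfin2] at hcomb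
    have : (μ {ω | ε * n ≤ ∑ r ∈ Finset.range (ν n ω), f r ω}).toReal ≤ B k := by
      rw [hBdef]
      dsimp only
      have hx1 : (μ (⋂ r ∈ Finset.range m, {ω | X r ω < n})).toReal
          ≤ Real.exp (-(c₂ * c)) := by
        rw [hE1]
        exact hE1b
      have hx2 := le_trans hE2 halg
      calc (μ {ω | ε * n ≤ ∑ r ∈ Finset.range (ν n ω), f r ω}).toReal
          ≤ (μ (⋂ r ∈ Finset.range m, {ω | X r ω < n})).toReal
            + (μ {ω | ε * n ≤ ∑ r ∈ Finset.range m, f r ω}).toReal := hcomb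
        _ ≤ Real.exp (-(c₂ * c)) + C₃ * (k:ℝ)^(-(1:ℝ)/3) := add_le_add hx1 hx2
    exact this
    -- assemble limsup
  set P : ℕ → ℕ → ℝ := fun k n => (μ {ω | ε * n ≤ ∑ r ∈ Finset.range (ν n ω),
    if (X r ω : ℝ) < (n : ℝ) / k then (X r ω : ℝ) else 0}).toReal with hPdef
  have hPnn : ∀ k n, 0 ≤ P k n := fun k n => ENNReal.toReal_nonneg
  have hP1 : ∀ k n, P k n ≤ 1 := fun k n => by
    rw [hPdef]
    dsimp only
    rw [show (1:ℝ) = (1:ENNReal).toReal by simp]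
    exact ENNReal.toReal_mono ENNReal.one_ne_top prob_le_one
  have hcob : ∀ k, IsCoboundedUnder (· ≤ ·) atTop (P k) :=
    fun k => isCoboundedUnder_le_of_le atTop (fun n => hPnn k n)
  have hbdd : ∀ k, IsBoundedUnder (· ≤ ·) atTop (P k) :=
    fun k => ⟨1, Filter.eventually_map.mpr (Eventually.of_forall (hP1 k))⟩
  have hLub : ∀ k, 1 ≤ k → Filter.limsup (P k) atTop ≤ B k := by
    intro k hk
    refine limsup_le_of_le (hcob k) ?_
    exact eventually_atTop.mpr ⟨max (max N k) (k * N^3 + 1), hmain k hk⟩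
  have hLlb : ∀ k, 0 ≤ Filter.limsup (P k) atTop := fun k =>
    le_limsup_of_frequently_le (Eventually.of_forall (hPnn k)).frequently (hbdd k)
  have hBt : Tendsto B atTop (𝓝 0) := by
    have t1 : Tendsto (fun k : ℕ => (k:ℝ)^((1:ℝ)/3)) atTop atTop :=
      (tendsto_rpow_atTop (by norm_num)).comp tendsto_natCast_atTop_atTop
    have h1 : Tendsto (fun k : ℕ => Real.exp (-(c₂ * (k:ℝ)^((1:ℝ)/3)))) atTop (𝓝 0) :=
      Real.tendsto_exp_atBot.comp (tendsto_neg_atTop_atBot.comp (t1.const_mul_atTop hc₂))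
    have h2 : Tendsto (fun k : ℕ => C₃ * (k:ℝ)^(-(1:ℝ)/3)) atTop (𝓝 0) := by
      have h3 : Tendsto (fun k : ℕ => (k:ℝ)^(-(1:ℝ)/3)) atTop (𝓝 0) := by
        have := (tendsto_rpow_neg_atTop (by norm_num : (0:ℝ) < 1/3)).comp
          (tendsto_natCast_atTop_atTop (R := ℝ))
        have heq : (fun k : ℕ => (k:ℝ)^(-(1:ℝ)/3))
            = (fun x : ℝ => x ^ (-(1/3 : ℝ))) ∘ (fun k : ℕ => (k:ℝ)) := by
          funext k
          simp [neg_div]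
        rw [heq]
        exact this
      have := h3.const_mul C₃
      simpa using this
    have := h1.add h2
    rw [hBdef]
    simpa using this
  exact tendsto_of_tendsto_of_tendsto_of_le_of_le' tendsto_const_nhds hBt
    (Eventually.of_forall hLlb) (eventually_atTop.mpr ⟨1, hLub⟩)
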